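/- arXiv:2502.03348 — 3 statements merged into one kernel-verified Lean document; each statement's English description precedes it below -/
import Mathlib

section
/- Let p be an odd prime. Then for every u ∈ Z_p^p, D^p(u) = 2·u, where D is the Ducci map on Z_p^p. Consequently P_p(p) = p·δ, where δ is the multiplicative order of 2 mod p. -/
def ducci {m n : ℕ} [NeZero n] (u : Fin n → ZMod m) : Fin n → ZMod m :=
  fun i => u i + u (i + 1)

open Finset
open Fin.NatCast

lemma ducci_iter {p : ℕ} [NeZero p] (k : ℕ) (u : Fin p → ZMod p) (i : Fin p) :
    ducci^[k] u i = ∑ s ∈ range (k+1), (k.choose s : ZMod p) * u (i + (s : Fin p)) := by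
  induction k generalizing u i with
  | zero => simp
  | succ k ih =>
    rw [Function.iterate_succ_apply']
    show (ducci^[k] u) i + (ducci^[k] u) (i+1) = _
    rw [ih, ih]
    rw [Finset.sum_range_succ' (fun s => ((k+1).choose s : ZMod p) * u (i + (s : Fin p))) (k+1)]
    have h1 : ∀ s ∈ range (k+1), ((k+1).choose (s+1) : ZMod p) * u (i + ((s+1 : ℕ) : Fin p))
        = (k.choose s : ZMod p) * u (i + ((s+1:ℕ) : Fin p))
          + (k.choose (s+1) : ZMod p) * u (i + ((s+1:ℕ) : Fin p)) := by
      intro s _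
      rw [Nat.choose_succ_succ]
      push_cast
      ring
    rw [Finset.sum_congr rfl h1, Finset.sum_add_distrib]
    have h2 : ∑ s ∈ range (k+1), (k.choose s : ZMod p) * u (i + 1 + (s : Fin p))
        = ∑ s ∈ range (k+1), (k.choose s : ZMod p) * u (i + ((s+1:ℕ) : Fin p)) := by
      apply Finset.sum_congr rfl
      intro s _
      congr 1
      push_cast
      rw [add_assoc, add_comm (1 : Fin p)]
    have h3 : ∑ s ∈ range (k+1), (k.choose s : ZMod p) * u (i + (s : Fin p))
        = ∑ s ∈ range (k+1), (k.choose (s+1) : ZMod p) * u (i + ((s+1:ℕ) : Fin p))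
          + (k.choose 0 : ZMod p) * u (i + ((0:ℕ) : Fin p)) := by
      rw [Finset.sum_range_succ' (fun s => (k.choose s : ZMod p) * u (i + (s : Fin p))) k,
        Finset.sum_range_succ]
      simp [Nat.choose_succ_self]
    rw [h2, h3]
    simp
    ring

lemma ducci_p (p : ℕ) [Fact p.Prime] (u : Fin p → ZMod p) :
    ducci^[p] u = fun i => 2 * u i := by
  have hp : p.Prime := Fact.out
  funext i
  rw [ducci_iter, Finset.sum_range_succ]
  have h0 : ∑ s ∈ range p, (p.choose s : ZMod p) * u (i + (s : Fin p))
      = (p.choose 0 : ZMod p) * u (i + ((0:ℕ) : Fin p)) := by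
    apply Finset.sum_eq_single_of_mem 0 (Finset.mem_range.mpr hp.pos)
    intro s hs hs0
    have : (p.choose s : ZMod p) = 0 := by
      rw [ZMod.natCast_eq_zero_iff]
      exact hp.dvd_choose_self hs0 (Finset.mem_range.mp hs)
    rw [this, zero_mul]
  rw [h0]
  have : ((p : ℕ) : Fin p) = 0 := Fin.natCast_self p
  simp [this]
  ring

lemma ducci_smul {p : ℕ} [NeZero p] (k : ℕ) (c : ZMod p) (u : Fin p → ZMod p) :
    ducci^[k] (fun i => c * u i) = fun i => c * ducci^[k] u i := by
  induction k generalizing u with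
  | zero => rfl
  | succ k ih =>
    rw [Function.iterate_succ_apply, Function.iterate_succ_apply]
    have : ducci (fun i => c * u i) = fun i => c * ducci u i := by
      funext i; simp [ducci]; ring
    rw [this, ih]

lemma ducci_pq (p : ℕ) [Fact p.Prime] (q : ℕ) (u : Fin p → ZMod p) :
    ducci^[p * q] u = fun i => 2 ^ q * u i := by
  induction q with
  | zero => simp
  | succ q ih =>
    have : p * (q + 1) = p + p * q := by ring
    rw [this, Function.iterate_add_apply, ih]
    rw [ducci_p]
    funext i
    ring

lemma ducci_eval (p : ℕ) [Fact p.Prime] (hp3 : 3 ≤ p) (r : ℕ) (hr : r < p) :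
    ducci^[r] (fun i : Fin p => if i.val = p - 1 then (1 : ZMod p) else 0)
      ⟨p - 2, by omega⟩ = (r : ZMod p) := by
  rw [ducci_iter]
  have key : ∀ s ∈ range (r+1),
      (r.choose s : ZMod p) * (if ((⟨p-2, by omega⟩ : Fin p) + (s : Fin p)).val = p - 1
        then (1:ZMod p) else 0)
      = if s = 1 then (r.choose s : ZMod p) else 0 := by
    intro s hs
    have hs' : s < p := by have := Finset.mem_range.mp hs; omega
    have hval : ((⟨p-2, by omega⟩ : Fin p) + (s : Fin p)).val = (p - 2 + s) % p := by
      rw [Fin.add_def, Fin.val_natCast, Nat.mod_eq_of_lt hs']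
    rw [hval]
    have hcond : (p - 2 + s) % p = p - 1 ↔ s = 1 := by
      constructor
      · intro h
        rcases Nat.lt_or_ge (p - 2 + s) p with h2 | h2
        · rw [Nat.mod_eq_of_lt h2] at h; omega
        · have : (p - 2 + s) % p = p - 2 + s - p := by
            rw [Nat.mod_eq_sub_mod h2, Nat.mod_eq_of_lt (by omega)]
          omega
      · intro h; subst h; rw [Nat.mod_eq_of_lt (by omega)]; omega
    by_cases h1 : s = 1
    · subst h1; rw [if_pos (hcond.mpr rfl), if_pos rfl, mul_one]
    · have : ¬ ((p - 2 + s) % p = p - 1) := fun h => h1 (hcond.mp h)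
      simp [this, h1]
  rw [Finset.sum_congr rfl key, Finset.sum_ite_eq' (range (r+1)) 1
    (fun s => (r.choose s : ZMod p))]
  by_cases hr1 : 1 ≤ r
  · have : (1:ℕ) ∈ range (r+1) := Finset.mem_range.mpr (by omega)
    simp [this, Nat.choose_one_right]
  · have : r = 0 := by omega
    simp [this]

theorem ducci_pow_p_and_max_period (p : ℕ) [Fact p.Prime] (hodd : Odd p) :
    (∀ u : Fin p → ZMod p, ducci^[p] u = fun i => 2 * u i) ∧
    sInf {β : ℕ | 0 < β ∧
        ducci^[β] (fun i : Fin p => if i.val = p - 1 then (1 : ZMod p) else 0) =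
          fun i => if i.val = p - 1 then 1 else 0} =
      p * orderOf (2 : ZMod p) := by
  have hp : p.Prime := Fact.out
  have hp2 : p ≠ 2 := by rintro rfl; exact (Nat.not_odd_iff_even.mpr (by decide)) hodd
  have hp3 : 3 ≤ p := by
    rcases hp.two_le.lt_or_eq with h | h
    · omega
    · omega
  have h2ne : (2 : ZMod p) ≠ 0 := by
    intro h
    have : ((2:ℕ) : ZMod p) = 0 := by push_cast; exact h
    rw [ZMod.natCast_eq_zero_iff] at this
    exact hp2 ((Nat.prime_dvd_prime_iff_eq hp Nat.prime_two).mp this)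
  have hfin : IsOfFinOrder (2 : ZMod p) := by
    apply isOfFinOrder_iff_pow_eq_one.mpr
    exact ⟨p - 1, by omega, ZMod.pow_card_sub_one_eq_one h2ne⟩
  have hδpos : 0 < orderOf (2 : ZMod p) := hfin.orderOf_pos
  have h2δ : (2 : ZMod p) ^ orderOf (2 : ZMod p) = 1 := pow_orderOf_eq_one _
  set E : Fin p → ZMod p := fun i => if i.val = p - 1 then (1 : ZMod p) else 0 with hE
  refine ⟨ducci_p p, ?_⟩
  set δ := orderOf (2 : ZMod p) with hδ
  have hmem : p * δ ∈ {β : ℕ | 0 < β ∧ ducci^[β] E = E} := by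
    constructor
    · positivity
    · rw [ducci_pq]
      funext i; rw [h2δ, one_mul]
  apply le_antisymm
  · exact Nat.sInf_le hmem
  · apply le_csInf ⟨p * δ, hmem⟩
    rintro β ⟨hβpos, hβ⟩
    -- write β = β % p + p * (β / p)
    set q := β / p with hq
    set r := β % p with hrdef
    have hsplit : β = r + p * q := by rw [hrdef, hq, Nat.mod_add_div]
    have hstep : ducci^[β] E = fun i => 2 ^ q * ducci^[r] E i := by
      rw [hsplit, Function.iterate_add_apply, ducci_pq, ducci_smul]
    have hrlt : r < p := Nat.mod_lt _ hp.pos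
    -- evaluate at index p-2
    have heval := congrFun (hstep.symm.trans hβ) ⟨p - 2, by omega⟩
    rw [ducci_eval p hp3 r hrlt] at heval
    have hE2 : E ⟨p - 2, by omega⟩ = 0 := by
      simp only [hE]
      rw [if_neg (by omega)]
    rw [hE2] at heval
    have hr0 : r = 0 := by
      have : (r : ZMod p) = 0 := by
        rcases mul_eq_zero.mp heval with h | h
        · exact absurd h (pow_ne_zero _ h2ne)
        · exact h
      rw [ZMod.natCast_eq_zero_iff] at this
      exact Nat.eq_zero_of_dvd_of_lt this hrlt
    -- now evaluate at index p-1
    have h2q : (2 : ZMod p) ^ q = 1 := by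
      have heval1 := congrFun (hstep.symm.trans hβ) ⟨p - 1, by omega⟩
      simp only [hr0, Function.iterate_zero_apply, hE] at heval1
      simpa using heval1
    have hδq : δ ∣ q := orderOf_dvd_of_pow_eq_one h2q
    have hqpos : 0 < q := by
      rcases Nat.eq_zero_or_pos q with h | h
      · exfalso; rw [h, Nat.mul_zero] at hsplit; omega
      · exact h
    calc p * δ ≤ p * q := Nat.mul_le_mul_left p (Nat.le_of_dvd hqpos hδq)
    _ = β := by omega
end

section
/- Let p be an odd prime and u = (x_1,...,x_p) ∈ Z_p^p with D^(p−1)(u) = u, where D is the Ducci map. Then all entries of u are equal: x_1 = x_2 = ... = x_p. -/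
theorem const_of_ducci_pow_pred (p : ℕ) [Fact p.Prime] (hodd : Odd p)
    (u : Fin p → ZMod p) (h : ducci^[p - 1] u = u) :
    ∀ i j : Fin p, u i = u j := by
  have hp : p.Prime := Fact.out
  haveI : CharP (Module.End (ZMod p) (Fin p → ZMod p)) p :=
    charP_of_injective_algebraMap (algebraMap (ZMod p) _).injective p
  set S : Module.End (ZMod p) (Fin p → ZMod p) :=
    LinearMap.funLeft (ZMod p) (ZMod p) (· + 1) with hS
  set D : Module.End (ZMod p) (Fin p → ZMod p) := 1 + S with hDdef
  have hD : ∀ v, D v = ducci v := by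
    intro v; funext i
    simp [hDdef, hS, ducci, LinearMap.funLeft_apply]
  have hDn : ∀ n v, (D ^ n) v = ducci^[n] v := by
    intro n
    induction n with
    | zero => intro v; simp
    | succ n ih =>
      intro v
      rw [pow_succ, Module.End.mul_apply, hD, ih, ← Function.comp_apply (f := ducci^[n]),
        ← Function.iterate_succ]
  open Fin.NatCast Fin.CommRing in
  have hSn : ∀ (n : ℕ) (v : Fin p → ZMod p) (i : Fin p), (S ^ n) v i = v (i + (n : Fin p)) := by
    intro n
    induction n with
    | zero => intro v i; simp
    | succ n ih =>
      intro v i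
      rw [pow_succ, Module.End.mul_apply, ih (S v) i]
      simp only [hS, LinearMap.funLeft_apply]
      congr 1
      push_cast
      ring
  have hSp : S ^ p = 1 := by
    apply LinearMap.ext; intro v
    funext i
    rw [hSn p v i, Fin.natCast_self, add_zero, Module.End.one_apply]
  have hDp : D ^ p = 1 + 1 := by
    rw [hDdef, add_pow_char_of_commute _ (Commute.one_left S), one_pow, hSp]
  have hiter : ducci^[p] u = ducci u := by
    have h1 : ducci^[p - 1 + 1] u = ducci u := by
      rw [Function.iterate_succ', Function.comp_apply, h]
    rwa [Nat.sub_add_cancel hp.one_lt.le] at h1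
  have key : ∀ i : Fin p, u (i + 1) = u i := by
    intro i
    have h1 : (D ^ p) u = ducci^[p] u := hDn p u
    rw [hDp, hiter] at h1
    have h2 := congrFun h1 i
    simp only [LinearMap.add_apply, Module.End.one_apply, ducci] at h2
    exact (add_left_cancel h2).symm
  open Fin.NatCast Fin.CommRing in
  have aux : ∀ (k : ℕ) (i : Fin p), u (i + (k : Fin p)) = u i := by
    intro k
    induction k with
    | zero => intro i; simp
    | succ k ih =>
      intro i
      have e : i + ((k + 1 : ℕ) : Fin p) = (i + (k : Fin p)) + 1 := by push_cast; ring
      rw [e, key, ih]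
  intro i j
  open Fin.NatCast Fin.CommRing in
  have e : j = i + ((j - i : Fin p).val : Fin p) := by
    rw [Fin.cast_val_eq_self]; ring
  rw [e, aux]
end

section
/- Let p be an odd prime and δ the multiplicative order of 2 mod p. Then the set of Ducci periods of tuples in Z_p^p is exactly {1, δ, p·δ}: Per(u) = 1 iff u = 0; Per(u) = δ iff u = (x,...,x) with x ≠ 0; and Per(u) = p·δ for all other u. -/
noncomputable def Per {m n : ℕ} [NeZero n] (u : Fin n → ZMod m) : ℕ :=
  sInf {β : ℕ | 0 < β ∧ ducci^[β] u = u}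

/-! ### Auxiliary commutative-ring expansion lemmas -/

lemma expand_one {R : Type*} [CommRing R] (a b : R) (n : ℕ) :
    ∃ g : R, (a + b) ^ n = a ^ n + b * g := by
  induction n with
  | zero => exact ⟨0, by ring⟩
  | succ n ih =>
    obtain ⟨g, hg⟩ := ih
    exact ⟨a ^ n + g * (a + b), by rw [pow_succ, hg]; ring⟩

lemma expand_two {R : Type*} [CommRing R] (a b : R) (n : ℕ) :
    ∃ g : R, (a + b) ^ (n + 1)
      = a ^ (n + 1) + ((n : R) + 1) * a ^ n * b + b * b * g := by
  induction n with
  | zero => exact ⟨0, by push_cast; ring⟩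
  | succ n ih =>
    obtain ⟨g, hg⟩ := ih
    refine ⟨(n + 1 : R) * a ^ n + g * (a + b), ?_⟩
    rw [pow_succ, hg]
    push_cast
    ring

/-! ### Setup: the Ducci map as a linear endomorphism -/

section Ducci

variable {p : ℕ} [Fact p.Prime]

local notation "E" => Module.End (ZMod p) (Fin p → ZMod p)

/-- The cyclic shift. -/
def Sh : Module.End (ZMod p) (Fin p → ZMod p) :=
  LinearMap.funLeft (ZMod p) (ZMod p) (fun i => i + 1)

/-- The Ducci map as a linear endomorphism. -/
def Dl : Module.End (ZMod p) (Fin p → ZMod p) := 1 + Sh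

/-- The nilpotent part. -/
def Nl : Module.End (ZMod p) (Fin p → ZMod p) := Sh - 1

/-- Evaluation of polynomials at the shift. -/
noncomputable def Φ : Polynomial (ZMod p) →ₐ[ZMod p] Module.End (ZMod p) (Fin p → ZMod p) :=
  Polynomial.aeval Sh

lemma Sh_apply (u : Fin p → ZMod p) (i : Fin p) : Sh u i = u (i + 1) := rfl

lemma ducci_eq (u : Fin p → ZMod p) : ducci u = Dl u := rfl

lemma iterate_eq (k : ℕ) (u : Fin p → ZMod p) : ducci^[k] u = (Dl ^ k) u := by
  induction k with
  | zero => simp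
  | succ k ih =>
    rw [Function.iterate_succ_apply', ih, ducci_eq, ← Module.End.mul_apply, ← pow_succ']

open Fin.NatCast in
lemma Sh_pow_apply (k : ℕ) (u : Fin p → ZMod p) (i : Fin p) :
    (Sh ^ k) u i = u (i + (k : Fin p)) := by
  induction k generalizing i with
  | zero => simp
  | succ k ih =>
    rw [pow_succ', Module.End.mul_apply, Sh_apply, ih]
    congr 1
    push_cast
    rw [add_assoc, add_comm (1 : Fin p)]

lemma Sh_pow_p : (Sh : E) ^ p = 1 := by
  refine LinearMap.ext fun u => funext fun i => ?_
  rw [Sh_pow_apply]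
  simp

lemma Dl_eq_phi : (Dl : E) = Φ (Polynomial.X + 1) := by
  rw [Dl, Φ, map_add, Polynomial.aeval_X, map_one, add_comm]

lemma Nl_eq_phi : (Nl : E) = Φ (Polynomial.X - 1) := by
  rw [Nl, Φ, map_sub, Polynomial.aeval_X, map_one]

lemma Dl_pow_p : (Dl : E) ^ p = algebraMap (ZMod p) E 2 := by
  rw [Dl_eq_phi, ← map_pow, add_pow_char, one_pow, map_add, map_pow, map_one, Φ,
    Polynomial.aeval_X, Sh_pow_p, map_ofNat]
  norm_num

lemma Nl_pow_p : (Nl : E) ^ p = 0 := by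
  rw [Nl_eq_phi, ← map_pow, sub_pow_char, one_pow, map_sub, map_pow, map_one, Φ,
    Polynomial.aeval_X, Sh_pow_p, sub_self]

lemma isUnit_scalar_add_nil {c : ZMod p} (hc : c ≠ 0) (g : Polynomial (ZMod p)) :
    IsUnit (algebraMap (ZMod p) E c + Nl * Φ g) := by
  have hcomm : Commute (Nl : E) (Φ g) := by
    rw [Nl_eq_phi]
    exact (Commute.all _ g).map Φ.toRingHom
  have hnil : IsNilpotent (Nl * Φ g : E) := ⟨p, by rw [hcomm.mul_pow, Nl_pow_p, zero_mul]⟩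
  have hu : IsUnit (algebraMap (ZMod p) E c) :=
    (isUnit_iff_ne_zero.mpr hc).map (algebraMap (ZMod p) E)
  exact hnil.isUnit_add_left_of_commute hu (Algebra.commutes c _).symm

lemma injective_of_isUnit {A : E} (h : IsUnit A) : Function.Injective A :=
  ((Module.End.isUnit_iff A).mp h).1

open Fin.NatCast in
/-- kernel of `Nl` = constants. -/
lemma const_of_Nl_eq_zero {u : Fin p → ZMod p} (h : Nl u = 0) :
    ∃ x : ZMod p, u = fun _ => x := by
  have hs : ∀ i : Fin p, u (i + 1) = u i := by
    intro i
    have := congrFun h i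
    simp only [Nl, LinearMap.sub_apply, Pi.sub_apply, Sh_apply, Module.End.one_apply,
      Pi.zero_apply, sub_eq_zero] at this
    exact this
  refine ⟨u 0, funext fun i => ?_⟩
  have key : ∀ k : ℕ, u ((k : Fin p)) = u 0 := by
    intro k
    induction k with
    | zero => simp
    | succ k ih => rw [Nat.cast_add, Nat.cast_one, hs, ih]
  have : u ((((i : ℕ)) : Fin p)) = u 0 := key i
  rwa [Fin.cast_val_eq_self] at this

/-- If `d` is a period smaller than the order of 2, then `u = 0`. -/
lemma eq_zero_of_small_period {d : ℕ} (hd0 : 0 < d) (hdlt : d < orderOf (2 : ZMod p))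
    {u : Fin p → ZMod p} (hu : ducci^[d] u = u) : u = 0 := by
  obtain ⟨g, hg⟩ := expand_one (2 : Polynomial (ZMod p)) (Polynomial.X - 1) d
  have hXp : (Polynomial.X + 1 : Polynomial (ZMod p)) ^ d
      = 2 ^ d + (Polynomial.X - 1) * g := by rw [← hg]; ring_nf
  have hc : (2 : ZMod p) ^ d - 1 ≠ 0 := by
    refine sub_ne_zero.mpr fun h1 => ?_
    exact absurd (orderOf_le_of_pow_eq_one hd0 h1) (not_le.mpr hdlt)
  have h2 : (Φ ((2 : Polynomial (ZMod p)) ^ d) : E) = algebraMap (ZMod p) E ((2 : ZMod p) ^ d) := by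
    rw [map_pow, map_pow, map_ofNat, map_ofNat]
  have hop : (Dl : E) ^ d - 1
      = algebraMap (ZMod p) E ((2 : ZMod p) ^ d - 1) + Nl * Φ g := by
    rw [Dl_eq_phi, ← map_pow, hXp, map_add, map_mul, ← Nl_eq_phi, h2, map_sub, map_one]
    abel
  have hunit : IsUnit ((Dl : E) ^ d - 1) := hop ▸ isUnit_scalar_add_nil hc g
  have h0 : ((Dl : E) ^ d - 1) u = ((Dl : E) ^ d - 1) 0 := by
    rw [map_zero, LinearMap.sub_apply, ← iterate_eq, hu, Module.End.one_apply, sub_self]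
  exact injective_of_isUnit hunit h0

/-- If the order `δ` of 2 is a period, then `u` is constant. -/
lemma const_of_order_period (hp2 : (2 : ZMod p) ≠ 0) (hlt : orderOf (2 : ZMod p) < p)
    (h0 : 0 < orderOf (2 : ZMod p)) {u : Fin p → ZMod p}
    (hu : ducci^[orderOf (2 : ZMod p)] u = u) : ∃ x : ZMod p, u = fun _ => x := by
  set δ := orderOf (2 : ZMod p) with hδdef
  obtain ⟨m, hm⟩ : ∃ m, δ = m + 1 := ⟨δ - 1, by omega⟩
  obtain ⟨g, hg⟩ := expand_two (2 : Polynomial (ZMod p)) (Polynomial.X - 1) m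
  set q : Polynomial (ZMod p) :=
    Polynomial.C (((m : ZMod p) + 1) * 2 ^ m) + (Polynomial.X - 1) * g with hq
  have hpoly : (Polynomial.X + 1 : Polynomial (ZMod p)) ^ (m + 1)
      = 2 ^ (m + 1) + (Polynomial.X - 1) * q := by
    have hXp : (Polynomial.X + 1 : Polynomial (ZMod p)) = 2 + (Polynomial.X - 1) := by ring
    rw [hXp, hg, hq]
    have hC : (Polynomial.C (((m : ZMod p) + 1) * 2 ^ m) : Polynomial (ZMod p))
        = ((m : Polynomial (ZMod p)) + 1) * 2 ^ m := by
      push_cast [map_mul, map_add, map_pow, map_one, map_ofNat]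
      norm_num
    rw [hC]
    ring
  -- the operator identity : Dl^δ - 1 = Nl * Φ q
  have hop : (Dl : E) ^ δ - 1 = Nl * Φ q := by
    have e2 : (Φ ((Polynomial.X - 1) * q) : E) = Nl * Φ q := by
      rw [map_mul, ← Nl_eq_phi]
    have h2 : (Φ ((2 : Polynomial (ZMod p)) ^ (m + 1)) : E)
        = algebraMap (ZMod p) E ((2 : ZMod p) ^ (m + 1)) := by
      rw [map_pow, map_pow, map_ofNat, map_ofNat]
    rw [Dl_eq_phi, ← map_pow, hm, hpoly, map_add, e2, h2, ← hm, hδdef, pow_orderOf_eq_one,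
      map_one]
    abel
  -- Φ q is a unit
  have hcval : ((m : ZMod p) + 1) * 2 ^ m ≠ 0 := by
    have h1 : ((m : ZMod p) + 1) = ((δ : ℕ) : ZMod p) := by rw [hm]; push_cast; ring
    have h2 : ((δ : ℕ) : ZMod p) ≠ 0 := by
      rw [Ne, ZMod.natCast_eq_zero_iff]
      exact fun hdvd => absurd (Nat.le_of_dvd h0 hdvd) (not_le.mpr hlt)
    exact mul_ne_zero (h1 ▸ h2) (pow_ne_zero m hp2)
  have hΦq : (Φ q : E) = algebraMap (ZMod p) E (((m : ZMod p) + 1) * 2 ^ m)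
      + Nl * Φ g := by
    have e1 : (Φ (Polynomial.C (((m : ZMod p) + 1) * 2 ^ m)) : E)
        = algebraMap (ZMod p) E (((m : ZMod p) + 1) * 2 ^ m) := by
      simp only [Φ, Polynomial.aeval_C]
    have e2 : (Φ ((Polynomial.X - 1) * g) : E) = Nl * Φ g := by
      rw [map_mul, ← Nl_eq_phi]
    rw [hq, map_add, e1, e2]
  have hunit : IsUnit (Φ q : E) := by
    rw [hΦq]
    exact isUnit_scalar_add_nil hcval g
  -- conclude
  have hNlu : (Φ q : E) (Nl u) = (Φ q : E) 0 := by
    have hcomm : (Nl : E) * Φ q = Φ q * Nl := by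
      rw [Nl_eq_phi]
      exact ((Commute.all (Polynomial.X - 1) q).map Φ.toRingHom).eq
    have : ((Dl : E) ^ δ - 1) u = 0 := by
      rw [LinearMap.sub_apply, ← iterate_eq, hu, Module.End.one_apply, sub_self]
    rw [hop, hcomm] at this
    rw [map_zero]
    exact this
  exact const_of_Nl_eq_zero (injective_of_isUnit hunit hNlu)

lemma iter_pmul (k : ℕ) (u : Fin p → ZMod p) :
    ducci^[p * k] u = ((2 : ZMod p) ^ k) • u := by
  rw [iterate_eq, pow_mul, Dl_pow_p, ← map_pow, Module.algebraMap_end_apply]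

end Ducci

/-! ### Period machinery -/

section PerFacts

variable {p : ℕ} [Fact p.Prime]

lemma iter_mul_self {u : Fin p → ZMod p} {π : ℕ} (h : ducci^[π] u = u) :
    ∀ q : ℕ, ducci^[π * q] u = u := by
  intro q
  induction q with
  | zero => simp
  | succ q ih =>
    rw [Nat.mul_succ, Function.iterate_add_apply, h]
    exact ih

lemma per_spec (u : Fin p → ZMod p) (hne : ∃ β, 0 < β ∧ ducci^[β] u = u) :
    0 < Per u ∧ ducci^[Per u] u = u := Nat.sInf_mem hne

lemma per_dvd (u : Fin p → ZMod p) (hne : ∃ β, 0 < β ∧ ducci^[β] u = u)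
    {β : ℕ} (hβ : ducci^[β] u = u) : Per u ∣ β := by
  obtain ⟨hpos, hper⟩ := per_spec u hne
  have hmod : ducci^[β % Per u] u = u := by
    calc ducci^[β % Per u] u
        = ducci^[β % Per u] (ducci^[Per u * (β / Per u)] u) := by
          rw [iter_mul_self hper]
      _ = ducci^[β % Per u + Per u * (β / Per u)] u :=
          (Function.iterate_add_apply _ _ _ u).symm
      _ = ducci^[β] u := by rw [Nat.mod_add_div]
      _ = u := hβ
  rcases Nat.eq_zero_or_pos (β % Per u) with h0 | h0
  · exact Nat.dvd_of_mod_eq_zero h0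
  · have hle : Per u ≤ β % Per u := Nat.sInf_le ⟨h0, hmod⟩
    have hlt : β % Per u < Per u := Nat.mod_lt _ hpos
    omega

lemma iter_const (k : ℕ) (x : ZMod p) :
    ducci^[k] (fun _ : Fin p => x) = fun _ => (2 : ZMod p) ^ k * x := by
  induction k with
  | zero => simp
  | succ k ih =>
    rw [Function.iterate_succ_apply', ih]
    funext i
    show (2 : ZMod p) ^ k * x + (2 : ZMod p) ^ k * x = (2 : ZMod p) ^ (k + 1) * x
    rw [pow_succ]
    ring

end PerFacts

/-! ### Main theorem -/

theorem periods_Zpp (p : ℕ) [Fact p.Prime] (hodd : Odd p)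
    (δ : ℕ) (hδ : δ = orderOf (2 : ZMod p)) :
    (∀ u : Fin p → ZMod p, Per u = 1 ∨ Per u = δ ∨ Per u = p * δ) ∧
    (∀ u : Fin p → ZMod p, Per u = 1 ↔ u = 0) ∧
    (∀ u : Fin p → ZMod p, Per u = δ ↔ ∃ x : ZMod p, x ≠ 0 ∧ u = fun _ => x) ∧
    (∀ u : Fin p → ZMod p, (¬ ∃ x : ZMod p, u = fun _ => x) → Per u = p * δ) := by
  have hp : p.Prime := Fact.out
  have hp2 : p ≠ 2 := by
    rintro rfl
    rw [Nat.odd_iff] at hodd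
    omega
  have h1p : 1 < p := hp.one_lt
  have h2 : (2 : ZMod p) ≠ 0 := by
    intro h
    have h' : ((2 : ℕ) : ZMod p) = 0 := by exact_mod_cast h
    rw [ZMod.natCast_eq_zero_iff] at h'
    exact hp2 ((Nat.prime_dvd_prime_iff_eq hp Nat.prime_two).mp h')
  have hferm : (2 : ZMod p) ^ (p - 1) = 1 := ZMod.pow_card_sub_one_eq_one h2
  have hδdvd : δ ∣ p - 1 := hδ ▸ orderOf_dvd_of_pow_eq_one hferm
  have hδ0 : 0 < δ := by
    rw [hδ, orderOf_pos_iff, isOfFinOrder_iff_pow_eq_one]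
    exact ⟨p - 1, by omega, hferm⟩
  have hδlt : δ < p := lt_of_le_of_lt (Nat.le_of_dvd (by omega) hδdvd) (by omega)
  have hδ1 : δ ≠ 1 := by
    rw [hδ, Ne, orderOf_eq_one_iff]
    intro h21
    have hs : (2 : ZMod p) - 1 = 0 := by rw [h21, sub_self]
    norm_num at hs
  have hpδ0 : 0 < p * δ := by positivity
  have hglobal : ∀ u : Fin p → ZMod p, ducci^[p * δ] u = u := by
    intro u
    rw [iterate_eq, pow_mul, Dl_pow_p, ← map_pow, hδ, pow_orderOf_eq_one, map_one,
      Module.End.one_apply]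
  have hne : ∀ u : Fin p → ZMod p, ∃ β, 0 < β ∧ ducci^[β] u = u :=
    fun u => ⟨p * δ, hpδ0, hglobal u⟩
  -- the zero tuple
  have hPzero : Per (0 : Fin p → ZMod p) = 1 := by
    have hdz : ducci (0 : Fin p → ZMod p) = 0 := by funext i; simp [ducci]
    have hmem : (1 : ℕ) ∈ {β : ℕ | 0 < β ∧ ducci^[β] (0 : Fin p → ZMod p) = 0} :=
      ⟨one_pos, by simpa using hdz⟩
    have hle : Per (0 : Fin p → ZMod p) ≤ 1 := Nat.sInf_le hmem
    have hpos := (per_spec 0 (hne 0)).1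
    omega
  -- Per u = 1 → u = 0
  have hone : ∀ u : Fin p → ZMod p, Per u = 1 → u = 0 := by
    intro u h1
    obtain ⟨_, hper⟩ := per_spec u (hne u)
    rw [h1, Function.iterate_one] at hper
    have hz : ∀ i, u (i + 1) = 0 := by
      intro i
      have hcf := congrFun hper i
      have hthis : u i + u (i + 1) = u i := hcf
      exact add_eq_left.mp hthis
    funext j
    have := hz (j - 1)
    rwa [sub_add_cancel] at this
  -- constant tuples
  have hPconst : ∀ x : ZMod p, x ≠ 0 → Per (fun _ : Fin p => x) = δ := by
    intro x hx
    have hchar : ∀ k : ℕ, (ducci^[k] (fun _ : Fin p => x) = fun _ => x) ↔ δ ∣ k := by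
      intro k
      rw [iter_const]
      constructor
      · intro h
        have h0 : (2 : ZMod p) ^ k * x = x := congrFun h ⟨0, hp.pos⟩
        have h1 : (2 : ZMod p) ^ k = 1 :=
          mul_right_cancel₀ hx (h0.trans (one_mul x).symm)
        exact hδ ▸ orderOf_dvd_of_pow_eq_one h1
      · rintro ⟨c, rfl⟩
        funext i
        rw [pow_mul, hδ, pow_orderOf_eq_one, one_pow, one_mul]
    have hmemδ : δ ∈ {β : ℕ | 0 < β ∧ ducci^[β] (fun _ : Fin p => x) = fun _ => x} :=
      ⟨hδ0, (hchar δ).mpr dvd_rfl⟩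
    have hle : Per (fun _ : Fin p => x) ≤ δ := Nat.sInf_le hmemδ
    obtain ⟨hpos, hper⟩ := per_spec (fun _ : Fin p => x) (hne _)
    have hdvd : δ ∣ Per (fun _ : Fin p => x) := (hchar _).mp hper
    have := Nat.le_of_dvd hpos hdvd
    omega
  -- non-constant tuples
  have hPother : ∀ u : Fin p → ZMod p, (¬ ∃ x, u = fun _ => x) → Per u = p * δ := by
    intro u hnc
    obtain ⟨hpos, hper⟩ := per_spec u (hne u)
    have hdvd : Per u ∣ p * δ := per_dvd u (hne u) (hglobal u)
    by_cases hpd : p ∣ Per u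
    · obtain ⟨d, hd⟩ := hpd
      have hd0 : 0 < d := by
        rcases Nat.eq_zero_or_pos d with h | h
        · rw [h, Nat.mul_zero] at hd; omega
        · exact h
      have hddvd : d ∣ δ := by
        have hmul : p * d ∣ p * δ := hd ▸ hdvd
        exact (Nat.mul_dvd_mul_iff_left hp.pos).mp hmul
      have hsmul : (2 : ZMod p) ^ d • u = u := by rw [← iter_pmul, ← hd, hper]
      have hdeq : d = δ := by
        by_contra hne'
        have hdlt : d < δ := lt_of_le_of_ne (Nat.le_of_dvd hδ0 hddvd) hne'
        have h2d : (2 : ZMod p) ^ d ≠ 1 := by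
          intro h1
          have hle' : orderOf (2 : ZMod p) ≤ d := orderOf_le_of_pow_eq_one hd0 h1
          rw [← hδ] at hle'
          omega
        apply hnc
        refine ⟨0, funext fun i => ?_⟩
        have hcf := congrFun hsmul i
        rw [Pi.smul_apply, smul_eq_mul] at hcf
        have hz : ((2 : ZMod p) ^ d - 1) * u i = 0 := by
          rw [sub_mul, hcf, one_mul, sub_self]
        rcases mul_eq_zero.mp hz with h | h
        · exact absurd (sub_eq_zero.mp h) h2d
        · exact h
      rw [hd, hdeq]
    · exfalso
      have hcop : Nat.Coprime p (Per u) := hp.coprime_iff_not_dvd.mpr hpd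
      have hdvdδ : Per u ∣ δ := hcop.symm.dvd_of_dvd_mul_left hdvd
      have hleδ : Per u ≤ δ := Nat.le_of_dvd hδ0 hdvdδ
      rcases lt_or_eq_of_le hleδ with hlt | heq
      · have h0 := eq_zero_of_small_period hpos
          (show Per u < orderOf (2 : ZMod p) by rw [← hδ]; exact hlt) hper
        exact hnc ⟨0, by rw [h0]; rfl⟩
      · refine hnc (const_of_order_period h2 ?_ ?_ ?_)
        · rw [← hδ]; exact hδlt
        · rw [← hδ]; exact hδ0
        · rw [← hδ, ← heq]; exact hper
  refine ⟨?_, ?_, ?_, ?_⟩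
  · intro u
    by_cases hc : ∃ x, u = fun _ => x
    · obtain ⟨x, rfl⟩ := hc
      by_cases hx : x = 0
      · subst hx
        exact Or.inl hPzero
      · exact Or.inr (Or.inl (hPconst x hx))
    · exact Or.inr (Or.inr (hPother u hc))
  · intro u
    constructor
    · exact hone u
    · rintro rfl; exact hPzero
  · intro u
    constructor
    · intro hperδ
      by_cases hc : ∃ x, u = fun _ => x
      · obtain ⟨x, rfl⟩ := hc
        refine ⟨x, ?_, rfl⟩
        rintro rfl
        rw [show (fun _ : Fin p => (0 : ZMod p)) = 0 from rfl, hPzero] at hperδ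
        exact hδ1 hperδ.symm
      · exfalso
        have hother := hPother u hc
        rw [hperδ] at hother
        have h2δ : 2 * δ ≤ p * δ := Nat.mul_le_mul_right δ (by omega)
        omega
    · rintro ⟨x, hx, rfl⟩
      exact hPconst x hx
  · exact hPother
end
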